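/- Let m be any monomial of degree k in n variables over 𝔽₂ (i.e., m(x) = ∏_{i∈I} x_i for some k-subset I of [n]). The number of k-dimensional linear subspaces U of 𝔽₂^n with ∑_{x∈U} m(x) ≠ 0 equals 2^{k(n−k)}. -/
import Mathlib

/-- Sum of a function over a (finite) set of points. -/
noncomputable def setSum {α β : Type*} [Fintype α] [AddCommMonoid β]
    (S : Set α) (F : α → β) : β :=
  ∑ x ∈ (Set.toFinite S).toFinset, F x

open Module

variable {n : ℕ} (I : Finset (Fin n))

/-- restriction to coordinates in `I` -/
noncomputable def lproj : (Fin n → ZMod 2) →ₗ[ZMod 2] (↥I → ZMod 2) :=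
  LinearMap.funLeft (ZMod 2) (ZMod 2) Subtype.val

/-- extension by zero -/
noncomputable def lsec : (↥I → ZMod 2) →ₗ[ZMod 2] (Fin n → ZMod 2) where
  toFun y j := if h : j ∈ I then y ⟨j, h⟩ else 0
  map_add' y z := by ext j; by_cases h : j ∈ I <;> simp [h]
  map_smul' c y := by ext j; by_cases h : j ∈ I <;> simp [h]

lemma lproj_lsec : (lproj I).comp (lsec I) = LinearMap.id := by
  ext y i
  simp [lproj, lsec, LinearMap.funLeft]

lemma lproj_bij {k : ℕ} (hI : I.card = k) (U : Submodule (ZMod 2) (Fin n → ZMod 2))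
    (hU : finrank (ZMod 2) U = k) (hd : Disjoint U (LinearMap.ker (lproj I))) :
    Function.Bijective ((lproj I).comp U.subtype) := by
  have hinj : Function.Injective ((lproj I).comp U.subtype) := by
    rw [← LinearMap.ker_eq_bot, LinearMap.ker_comp]
    exact Submodule.disjoint_iff_comap_eq_bot.mp hd
  refine ⟨hinj, ?_⟩
  have hfr : finrank (ZMod 2) (↥I → ZMod 2) = k := by
    rw [Module.finrank_pi, Fintype.card_coe, hI]
  exact (LinearMap.injective_iff_surjective_of_finrank_eq_finrank (by rw [hU, hfr])).mp hinj

lemma sum_eq_zero_of_not_disjoint (U : Submodule (ZMod 2) (Fin n → ZMod 2))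
    (hd : ¬ Disjoint U (LinearMap.ker (lproj I))) :
    setSum (U : Set (Fin n → ZMod 2)) (fun x => ∏ i ∈ I, x i) = 0 := by
  rw [Submodule.disjoint_def] at hd
  push_neg at hd
  obtain ⟨u, huU, huK, hu⟩ := hd
  rw [LinearMap.mem_ker] at huK
  have hu0 : ∀ i ∈ I, u i = 0 := by
    intro i hi
    have := congrFun huK ⟨i, hi⟩
    simpa [lproj, LinearMap.funLeft] using this
  unfold setSum
  refine Finset.sum_involution (fun x _ => x + u) ?_ ?_ ?_ ?_
  · intro a ha
    have : ∏ i ∈ I, (a + u) i = ∏ i ∈ I, a i :=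
      Finset.prod_congr rfl (fun i hi => by simp [hu0 i hi])
    rw [this, CharTwo.add_self_eq_zero]
  · intro a ha _
    simp [hu]
  · intro a ha
    simp only [Set.Finite.mem_toFinset, SetLike.mem_coe] at ha ⊢
    exact U.add_mem ha huU
  · intro a ha
    funext j
    simp [add_assoc, CharTwo.add_self_eq_zero]

lemma sum_eq_one_of_disjoint {k : ℕ} (hI : I.card = k)
    (U : Submodule (ZMod 2) (Fin n → ZMod 2))
    (hU : finrank (ZMod 2) U = k) (hd : Disjoint U (LinearMap.ker (lproj I))) :
    setSum (U : Set (Fin n → ZMod 2)) (fun x => ∏ i ∈ I, x i) = 1 := by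
  classical
  have hbij := lproj_bij I hI U hU hd
  let e := LinearEquiv.ofBijective _ hbij
  let σ : (↥I → ZMod 2) → (Fin n → ZMod 2) := fun y => ↑(e.symm y)
  have hσval : ∀ y (i : Fin n) (hi : i ∈ I), σ y i = y ⟨i, hi⟩ := by
    intro y i hi
    have : (lproj I) (↑(e.symm y)) = y := e.apply_symm_apply y
    have := congrFun this ⟨i, hi⟩
    simpa [lproj, LinearMap.funLeft] using this
  have hσinj : Function.Injective σ := by
    intro y z h
    have := e.symm.injective (Subtype.ext h)
    exact this
  have himg : (Set.toFinite (U : Set (Fin n → ZMod 2))).toFinset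
      = Finset.image σ Finset.univ := by
    ext x
    simp only [Set.Finite.mem_toFinset, SetLike.mem_coe, Finset.mem_image,
      Finset.mem_univ, true_and]
    constructor
    · intro hx
      exact ⟨e ⟨x, hx⟩, congrArg Subtype.val (e.symm_apply_apply ⟨x, hx⟩)⟩
    · rintro ⟨y, rfl⟩
      exact (e.symm y).2
  unfold setSum
  rw [himg, Finset.sum_image (fun y _ z _ h => hσinj h)]
  have hterm : ∀ y : (↥I → ZMod 2), ∏ i ∈ I, σ y i = ∏ i : ↥I, y i := by
    intro y
    rw [← Finset.prod_coe_sort I (fun i => σ y i)]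
    exact Finset.prod_congr rfl (fun i _ => hσval y i.1 i.2)
  calc ∑ y : (↥I → ZMod 2), ∏ i ∈ I, σ y i
      = ∑ y : (↥I → ZMod 2), ∏ i : ↥I, y i := by
        exact Finset.sum_congr rfl (fun y _ => hterm y)
    _ = 1 := by
        rw [← Fintype.piFinset_univ,
          ← Finset.prod_univ_sum (fun _ : ↥I => (Finset.univ : Finset (ZMod 2)))
            (fun _ b => b)]
        have h2 : ∑ b : ZMod 2, b = 1 := by decide
        simp [h2]

lemma card_graphs {k : ℕ} (hI : I.card = k) :
    Nat.card {U : Submodule (ZMod 2) (Fin n → ZMod 2) //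
      finrank (ZMod 2) U = k ∧ Disjoint U (LinearMap.ker (lproj I))} = 2 ^ (k * (n - k)) := by
  classical
  set K := LinearMap.ker (lproj I) with hKdef
  have hfrW : finrank (ZMod 2) (↥I → ZMod 2) = k := by
    rw [Module.finrank_pi, Fintype.card_coe, hI]
  let gmap : ((↥I → ZMod 2) →ₗ[ZMod 2] ↥K) → ((↥I → ZMod 2) →ₗ[ZMod 2] (Fin n → ZMod 2)) :=
    fun h => lsec I + K.subtype.comp h
  have hpg : ∀ h y, (lproj I) (gmap h y) = y := by
    intro h y
    have h1 : (lproj I) (lsec I y) = y := by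
      have := DFunLike.congr_fun (lproj_lsec I) y
      simpa using this
    have h2 : (lproj I) (K.subtype (h y)) = 0 := (h y).2
    simp [gmap, map_add, h1, h2]
  have ginj : ∀ h, Function.Injective (gmap h) := by
    intro h a b hab
    have := congrArg (lproj I) hab
    rwa [hpg, hpg] at this
  let Ψ : ((↥I → ZMod 2) →ₗ[ZMod 2] ↥K) → Submodule (ZMod 2) (Fin n → ZMod 2) :=
    fun h => LinearMap.range (gmap h)
  have hΨrank : ∀ h, finrank (ZMod 2) (Ψ h) = k := by
    intro h
    rw [show Ψ h = LinearMap.range (gmap h) from rfl,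
      LinearMap.finrank_range_of_inj (ginj h), hfrW]
  have hΨdisj : ∀ h, Disjoint (Ψ h) K := by
    intro h
    rw [Submodule.disjoint_def]
    rintro x ⟨y, rfl⟩ hxK
    have : y = 0 := by rw [← hpg h y]; exact hxK
    rw [this, map_zero]
  have hΨinj : Function.Injective Ψ := by
    intro h h' heq
    apply LinearMap.ext
    intro y
    have hy : gmap h y ∈ Ψ h' := by rw [← heq]; exact ⟨y, rfl⟩
    obtain ⟨z, hz⟩ := hy
    have hzy : z = y := by
      have := congrArg (lproj I) hz
      rwa [hpg, hpg] at this
    subst hzy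
    have heq2 : lsec I z + K.subtype (h' z) = lsec I z + K.subtype (h z) := hz
    have h3 : K.subtype (h' z) = K.subtype (h z) := add_left_cancel heq2
    exact (Subtype.ext h3).symm
  have hΨsurj : ∀ U : {U : Submodule (ZMod 2) (Fin n → ZMod 2) //
      finrank (ZMod 2) U = k ∧ Disjoint U K}, ∃ h, Ψ h = U.1 := by
    rintro ⟨U, hU, hd⟩
    have hbij := lproj_bij I hI U hU hd
    let e := LinearEquiv.ofBijective _ hbij
    let f : (↥I → ZMod 2) →ₗ[ZMod 2] (Fin n → ZMod 2) :=
      U.subtype ∘ₗ e.symm.toLinearMap - lsec I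
    have hf : ∀ y, f y ∈ K := by
      intro y
      have h1 : (lproj I) (lsec I y) = y := by
        have := DFunLike.congr_fun (lproj_lsec I) y
        simpa using this
      have h2 : (lproj I) (U.subtype (e.symm y)) = y := e.apply_symm_apply y
      have hfy : f y = U.subtype (e.symm y) - lsec I y := rfl
      rw [hKdef, LinearMap.mem_ker, hfy, map_sub, h2, h1, sub_self]
    refine ⟨LinearMap.codRestrict K f hf, ?_⟩
    have hgm : gmap (LinearMap.codRestrict K f hf) = U.subtype ∘ₗ e.symm.toLinearMap := by
      apply LinearMap.ext
      intro y
      show lsec I y + f y = U.subtype (e.symm y)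
      simp only [f, LinearMap.sub_apply, LinearMap.coe_comp, Function.comp_apply,
        LinearEquiv.coe_coe]
      abel
    show LinearMap.range (gmap _) = U
    rw [hgm, LinearMap.range_comp, LinearEquiv.range, Submodule.map_top,
      Submodule.range_subtype]
  have hcard := Nat.card_congr
    (Equiv.ofBijective (fun h => (⟨Ψ h, hΨrank h, hΨdisj h⟩ :
      {U : Submodule (ZMod 2) (Fin n → ZMod 2) //
        finrank (ZMod 2) U = k ∧ Disjoint U K}))
      ⟨fun a b hab => hΨinj (congrArg Subtype.val hab),
       fun U => by obtain ⟨h, hh⟩ := hΨsurj U; exact ⟨h, Subtype.ext hh⟩⟩)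
  rw [← hcard]
  -- now count the linear maps
  have hsurj : Function.Surjective (lproj I) := by
    intro y
    refine ⟨lsec I y, ?_⟩
    have := DFunLike.congr_fun (lproj_lsec I) y
    simpa using this
  have hfrK : finrank (ZMod 2) ↥K = n - k := by
    have h1 := LinearMap.finrank_range_add_finrank_ker (lproj I)
    rw [LinearMap.range_eq_top.mpr hsurj, finrank_top, hfrW] at h1
    have h2 : finrank (ZMod 2) (Fin n → ZMod 2) = n := by
      rw [Module.finrank_pi, Fintype.card_fin]
    rw [h2] at h1
    rw [hKdef]
    omega
  haveI : Finite ((↥I → ZMod 2) →ₗ[ZMod 2] ↥K) :=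
    Finite.of_injective _ DFunLike.coe_injective
  haveI : Fintype ((↥I → ZMod 2) →ₗ[ZMod 2] ↥K) := Fintype.ofFinite _
  rw [Nat.card_eq_fintype_card, card_eq_pow_finrank (K := ZMod 2), ZMod.card,
    Module.finrank_linearMap, hfrW, hfrK]

theorem stmt_11 (n k : ℕ) (I : Finset (Fin n)) (hI : I.card = k) :
    Set.ncard {U : Submodule (ZMod 2) (Fin n → ZMod 2) |
        Module.finrank (ZMod 2) U = k ∧
        setSum (U : Set (Fin n → ZMod 2)) (fun x => ∏ i ∈ I, x i) ≠ 0} =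
      2 ^ (k * (n - k)) := by
  have hset : {U : Submodule (ZMod 2) (Fin n → ZMod 2) |
      Module.finrank (ZMod 2) U = k ∧
      setSum (U : Set (Fin n → ZMod 2)) (fun x => ∏ i ∈ I, x i) ≠ 0} =
      {U : Submodule (ZMod 2) (Fin n → ZMod 2) |
      Module.finrank (ZMod 2) U = k ∧ Disjoint U (LinearMap.ker (lproj I))} := by
    ext U
    simp only [Set.mem_setOf_eq, and_congr_right_iff]
    intro hU
    constructor
    · intro hsum
      by_contra hd
      exact hsum (sum_eq_zero_of_not_disjoint I U hd)
    · intro hd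
      rw [sum_eq_one_of_disjoint I hI U hU hd]
      exact one_ne_zero
  rw [hset, ← Nat.card_coe_set_eq]
  exact card_graphs I hI
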